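/- arXiv:2604.26759 — 5 statements merged into one kernel-verified Lean document; each statement's English description precedes it below -/
import Mathlib

section
/- Let M, H ∈ ℝ^{n×n} be symmetric, m, h ∈ ℝⁿ, γ ∈ ℝ, and define f(u) = uᵀMu + 2mᵀu + γ and g(u) = uᵀHu + 2hᵀu. Suppose there exist λ* ∈ ℝ and u* ∈ ℝⁿ such that M + λ*H is positive definite, (M + λ*H)u* = −(m + λ*h), and g(u*) = 0. Then u* is a global minimizer of f over the feasible set {u ∈ ℝⁿ : g(u) = 0}, i.e., f(u*) ≤ f(u) for all u with g(u) = 0. (Exactness of the GTRS solution obtained from the KKT conditions.) -/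
open Matrix

/-- Exactness of the GTRS solution obtained from the KKT conditions: if `M + λ*H` is
positive definite, `(M + λ*H) u* = −(m + λ*h)` (stationarity), and `g(u*) = 0`
(feasibility), then `u*` globally minimizes `f(u) = uᵀMu + 2mᵀu + γ` over the feasible set
`{u : g(u) = uᵀHu + 2hᵀu = 0}`. -/
theorem stmt6 {n : ℕ} (M H : Matrix (Fin n) (Fin n) ℝ)
    (hMsymm : M.IsSymm) (hHsymm : H.IsSymm)
    (m h : Fin n → ℝ) (γ : ℝ) (lam : ℝ) (ustar : Fin n → ℝ)
    (hPD : (M + lam • H).PosDef)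
    (hstat : (M + lam • H) *ᵥ ustar = -(m + lam • h))
    (hfeas : ustar ⬝ᵥ (H *ᵥ ustar) + 2 * (h ⬝ᵥ ustar) = 0) :
    ∀ u : Fin n → ℝ, u ⬝ᵥ (H *ᵥ u) + 2 * (h ⬝ᵥ u) = 0 →
      ustar ⬝ᵥ (M *ᵥ ustar) + 2 * (m ⬝ᵥ ustar) + γ ≤
        u ⬝ᵥ (M *ᵥ u) + 2 * (m ⬝ᵥ u) + γ := by
  intro u hu
  set A := M + lam • H with hA
  set b := m + lam • h with hb
  have hAsymm : Aᵀ = A := by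
    simp [hA, Matrix.transpose_add, Matrix.transpose_smul, hMsymm.eq, hHsymm.eq]
  have hsym : ∀ x y : Fin n → ℝ, x ⬝ᵥ (A *ᵥ y) = (A *ᵥ x) ⬝ᵥ y := by
    intro x y
    rw [Matrix.dotProduct_mulVec, ← Matrix.mulVec_transpose, hAsymm]
  have h0 : 0 ≤ (u - ustar) ⬝ᵥ (A *ᵥ (u - ustar)) := by
    have := hPD.posSemidef.dotProduct_mulVec_nonneg (u - ustar)
    simpa using this
  -- expand the quadratic form
  have hexp : (u - ustar) ⬝ᵥ (A *ᵥ (u - ustar)) =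
      u ⬝ᵥ (A *ᵥ u) + 2 * (b ⬝ᵥ u) - (ustar ⬝ᵥ (A *ᵥ ustar) + 2 * (b ⬝ᵥ ustar)) := by
    have h1 : ustar ⬝ᵥ (A *ᵥ u) = -(b ⬝ᵥ u) := by
      rw [hsym, hstat]; simp
    have h2 : u ⬝ᵥ (A *ᵥ ustar) = -(b ⬝ᵥ u) := by
      rw [hstat]; simp [dotProduct_comm]
    have h3 : ustar ⬝ᵥ (A *ᵥ ustar) = -(b ⬝ᵥ ustar) := by
      rw [hstat]; simp [dotProduct_comm]
    rw [Matrix.mulVec_sub, dotProduct_sub, sub_dotProduct,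
      sub_dotProduct, h1, h2, h3]
    ring
  have hq : u ⬝ᵥ (A *ᵥ u) = u ⬝ᵥ (M *ᵥ u) + lam * (u ⬝ᵥ (H *ᵥ u)) := by
    simp [hA, Matrix.add_mulVec, Matrix.smul_mulVec, dotProduct_add,
      dotProduct_smul, smul_eq_mul]
  have hq' : ustar ⬝ᵥ (A *ᵥ ustar) = ustar ⬝ᵥ (M *ᵥ ustar) + lam * (ustar ⬝ᵥ (H *ᵥ ustar)) := by
    simp [hA, Matrix.add_mulVec, Matrix.smul_mulVec, dotProduct_add,
      dotProduct_smul, smul_eq_mul]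
  have hbu : b ⬝ᵥ u = m ⬝ᵥ u + lam * (h ⬝ᵥ u) := by
    simp [hb, add_dotProduct, smul_dotProduct, smul_eq_mul]
  have hbu' : b ⬝ᵥ ustar = m ⬝ᵥ ustar + lam * (h ⬝ᵥ ustar) := by
    simp [hb, add_dotProduct, smul_dotProduct, smul_eq_mul]
  rw [hexp, hq, hq', hbu, hbu'] at h0
  have e1 : lam * (u ⬝ᵥ (H *ᵥ u)) + 2 * lam * (h ⬝ᵥ u) = 0 := by linear_combination lam * hu
  have e2 : lam * (ustar ⬝ᵥ (H *ᵥ ustar)) + 2 * lam * (h ⬝ᵥ ustar) = 0 := by linear_combination lam * hfeas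
  linarith [h0]
end

section
/- Let M, H ∈ ℝ^{n×n} with H symmetric, m, h ∈ ℝⁿ, u(λ) = −(M + λH)⁻¹(m + λh), and φ(λ) = u(λ)ᵀH u(λ) + 2hᵀu(λ). If M + λ₀H is invertible, then φ is differentiable at λ₀ with φ′(λ₀) = −2 (H u(λ₀) + h)ᵀ (M + λ₀H)⁻¹ (H u(λ₀) + h). In particular, if M + λ₀H is in addition symmetric positive definite, then φ′(λ₀) ≤ 0. -/
open Matrix

attribute [local instance] Matrix.linftyOpNormedRing Matrix.linftyOpNormedAlgebra

/-- Derivative of the GTRS feasibility function `φ(λ) = u(λ)ᵀH u(λ) + 2hᵀu(λ)` with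
`u(λ) = −(M + λH)⁻¹(m + λh)`: if `M + λ₀H` is invertible then
`φ′(λ₀) = −2 (H u(λ₀) + h)ᵀ (M + λ₀H)⁻¹ (H u(λ₀) + h)`; if moreover `M + λ₀H` is
symmetric positive definite then `φ′(λ₀) ≤ 0`. -/
theorem stmt8 {n : ℕ} (M H : Matrix (Fin n) (Fin n) ℝ) (hHsymm : H.IsSymm)
    (m h : Fin n → ℝ) (lam0 : ℝ)
    (u : ℝ → Fin n → ℝ) (hu : ∀ lam, u lam = -((M + lam • H)⁻¹ *ᵥ (m + lam • h)))
    (φ : ℝ → ℝ) (hφ : ∀ lam, φ lam = u lam ⬝ᵥ (H *ᵥ u lam) + 2 * (h ⬝ᵥ u lam))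
    (hinv : IsUnit (M + lam0 • H).det) :
    HasDerivAt φ
      (-2 * ((H *ᵥ u lam0 + h) ⬝ᵥ ((M + lam0 • H)⁻¹ *ᵥ (H *ᵥ u lam0 + h)))) lam0 ∧
    ((M + lam0 • H).PosDef →
      -2 * ((H *ᵥ u lam0 + h) ⬝ᵥ ((M + lam0 • H)⁻¹ *ᵥ (H *ᵥ u lam0 + h))) ≤ 0) := by
  classical
  set A0 : Matrix (Fin n) (Fin n) ℝ := M + lam0 • H with hA0
  set B : Matrix (Fin n) (Fin n) ℝ := A0⁻¹ with hB
  obtain ⟨x, hx⟩ := (Matrix.isUnit_iff_isUnit_det A0).mpr hinv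
  have hxinv : (↑x⁻¹ : Matrix (Fin n) (Fin n) ℝ) = B := by
    rw [Matrix.coe_units_inv, hx]
  -- derivative of λ ↦ M + λ • H
  have hA : HasDerivAt (fun l : ℝ => M + l • H) H lam0 := by
    have := ((hasDerivAt_id lam0).smul_const H).const_add M
    simp only [one_smul, id_eq] at this
    exact this
  -- derivative of λ ↦ (M + λ • H)⁻¹
  have hN : HasDerivAt (fun l : ℝ => (M + l • H)⁻¹) (-(B * H * B)) lam0 := by
    have hF := hasFDerivAt_ringInverse (𝕜 := ℝ) x
    rw [hx] at hF
    have hcomp := hF.comp_hasDerivAt lam0 hA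
    have heq : (fun l : ℝ => Ring.inverse (M + l • H)) = fun l => (M + l • H)⁻¹ := by
      funext l; rw [Matrix.nonsing_inv_eq_ringInverse]
    rw [Function.comp_def, heq] at hcomp
    simp [hxinv, mul_assoc] at hcomp ⊢
    exact hcomp
  set N' : Matrix (Fin n) (Fin n) ℝ := -(B * H * B) with hN'
  -- entrywise derivatives of the inverse
  have hNe : ∀ i j, HasDerivAt (fun l : ℝ => (M + l • H)⁻¹ i j) (N' i j) lam0 := by
    intro i j
    exact ((LinearMap.toContinuousLinearMap
        (Matrix.entryLinearMap ℝ ℝ i j : Matrix (Fin n) (Fin n) ℝ →ₗ[ℝ] ℝ)).hasFDerivAt.comp_hasDerivAt lam0 hN)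
  -- componentwise derivative of u
  set v : Fin n → ℝ := m + lam0 • h with hv
  set w : Fin n → ℝ := -(B *ᵥ (H *ᵥ u lam0 + h)) with hw
  have hBv : B *ᵥ v = -(u lam0) := by rw [hu lam0]; simp [hv, hB, hA0]
  have hNv : N' *ᵥ v = B *ᵥ (H *ᵥ u lam0) := by
    rw [hN', Matrix.neg_mulVec, ← Matrix.mulVec_mulVec, ← Matrix.mulVec_mulVec, hBv]
    simp [Matrix.mulVec_neg]
  have hvec : -(N' *ᵥ v + B *ᵥ h) = w := by
    rw [hNv, hw]
    simp [Matrix.mulVec_add]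
  have hw' : ∀ i, -((N' *ᵥ v) i + (B *ᵥ h) i) = w i := by
    intro i
    have := congrFun hvec i
    simpa using this
  have hU : ∀ i, HasDerivAt (fun l => u l i) (w i) lam0 := by
    intro i
    have hsum : HasDerivAt (fun l : ℝ => ∑ j, (M + l • H)⁻¹ i j * (m j + l * h j))
        (∑ j, (N' i j * v j + B i j * h j)) lam0 := by
      apply HasDerivAt.fun_sum
      intro j _
      have h1 : HasDerivAt (fun l : ℝ => m j + l * h j) (h j) lam0 := by
        simpa using ((hasDerivAt_id lam0).mul_const (h j)).const_add (m j)
      have := (hNe i j).mul h1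
      simp [hv, hB, Pi.smul_apply, smul_eq_mul] at this ⊢
      exact this
    have heq : (fun l => u l i)
        = fun l : ℝ => -(∑ j, (M + l • H)⁻¹ i j * (m j + l * h j)) := by
      funext l
      rw [hu l]
      simp [Matrix.mulVec, dotProduct]
    rw [heq]
    have := hsum.neg
    have hderiv : -(∑ j, (N' i j * v j + B i j * h j)) = w i := by
      rw [← hw' i]
      simp [Matrix.mulVec, dotProduct, Finset.sum_add_distrib]
    rwa [hderiv] at this
  -- derivative of φ
  set u0 : Fin n → ℝ := u lam0 with hu0
  have hφ' : HasDerivAt φ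
      (w ⬝ᵥ (H *ᵥ u0) + u0 ⬝ᵥ (H *ᵥ w) + 2 * (h ⬝ᵥ w)) lam0 := by
    have hterm1 : HasDerivAt (fun l => u l ⬝ᵥ (H *ᵥ u l))
        (w ⬝ᵥ (H *ᵥ u0) + u0 ⬝ᵥ (H *ᵥ w)) lam0 := by
      have heq : (fun l => u l ⬝ᵥ (H *ᵥ u l))
          = fun l => ∑ i, u l i * ∑ j, H i j * u l j := by
        funext l; simp [dotProduct, Matrix.mulVec]
      rw [heq]
      have : HasDerivAt (fun l => ∑ i, u l i * ∑ j, H i j * u l j)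
          (∑ i, (w i * ∑ j, H i j * u0 j + u0 i * ∑ j, H i j * w j)) lam0 := by
        apply HasDerivAt.fun_sum
        intro i _
        exact (hU i).mul (HasDerivAt.fun_sum fun j _ => (hU j).const_mul (H i j))
      convert this using 1
      simp [dotProduct, Matrix.mulVec, Finset.sum_add_distrib]
    have hterm2 : HasDerivAt (fun l => 2 * (h ⬝ᵥ u l)) (2 * (h ⬝ᵥ w)) lam0 := by
      have : HasDerivAt (fun l => h ⬝ᵥ u l) (h ⬝ᵥ w) lam0 := by
        have heq : (fun l => h ⬝ᵥ u l) = fun l => ∑ i, h i * u l i := by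
          funext l; simp [dotProduct]
        rw [heq]
        have : HasDerivAt (fun l => ∑ i, h i * u l i) (∑ i, h i * w i) lam0 :=
          HasDerivAt.fun_sum fun i _ => (hU i).const_mul (h i)
        exact this
      exact this.const_mul 2
    have := hterm1.add hterm2
    have heq : φ = fun l => u l ⬝ᵥ (H *ᵥ u l) + 2 * (h ⬝ᵥ u l) := funext hφ
    rw [heq]
    exact this
  have hkey : w ⬝ᵥ (H *ᵥ u0) + u0 ⬝ᵥ (H *ᵥ w) + 2 * (h ⬝ᵥ w)
      = -2 * ((H *ᵥ u0 + h) ⬝ᵥ (B *ᵥ (H *ᵥ u0 + h))) := by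
    have h1 : u0 ⬝ᵥ (H *ᵥ w) = (H *ᵥ u0) ⬝ᵥ w := by
      rw [dotProduct_mulVec, ← Matrix.mulVec_transpose, hHsymm]
    have h2 : w ⬝ᵥ (H *ᵥ u0) = (H *ᵥ u0) ⬝ᵥ w := dotProduct_comm _ _
    rw [h1, h2, hw]
    simp [dotProduct_neg, add_dotProduct]
    ring
  constructor
  · exact hkey ▸ hφ'
  · intro hPD
    have hBpd : B.PosDef := hPD.inv
    have := hBpd.posSemidef.dotProduct_mulVec_nonneg (H *ᵥ u0 + h)
    simp only [star_trivial] at this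
    linarith [this]
end

section
/- Let M, H ∈ ℝ^{n×n} be symmetric, m, h ∈ ℝⁿ, u(λ) = −(M + λH)⁻¹(m + λh), and φ(λ) = u(λ)ᵀH u(λ) + 2hᵀu(λ). If λ₁ ≤ λ₂ and both M + λ₁H and M + λ₂H are positive definite, then φ(λ₂) ≤ φ(λ₁); i.e., φ is monotone nonincreasing on the interval where M + λH is positive definite. Consequently the bisection root search for φ(λ) = 0 over a bracket inside this interval is justified. -/
open Matrix

/-- `u = -A⁻¹ b` minimizes `v ↦ vᵀAv + 2bᵀv` for symmetric posdef `A`. -/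
lemma quad_min {n : ℕ} (A : Matrix (Fin n) (Fin n) ℝ) (hA : A.PosDef) (hs : A.IsSymm)
    (b u v : Fin n → ℝ) (hu : A *ᵥ u = -b) :
    u ⬝ᵥ (A *ᵥ u) + 2 * (b ⬝ᵥ u) ≤ v ⬝ᵥ (A *ᵥ v) + 2 * (b ⬝ᵥ v) := by
  have key : 0 ≤ (v - u) ⬝ᵥ (A *ᵥ (v - u)) := by
    rcases eq_or_ne (v - u) 0 with hvu | hvu
    · simp [hvu]
    · have := hA.dotProduct_mulVec_pos hvu
      simpa using this.le
  have hsym : ∀ x y : Fin n → ℝ, x ⬝ᵥ (A *ᵥ y) = (A *ᵥ x) ⬝ᵥ y := by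
    intro x y
    rw [dotProduct_mulVec, ← mulVec_transpose, hs.eq]
  have h1 : u ⬝ᵥ (A *ᵥ u) = -(b ⬝ᵥ u) := by
    rw [hu]; simp [dotProduct_comm]
  have h2 : u ⬝ᵥ (A *ᵥ v) = -(b ⬝ᵥ v) := by
    rw [hsym, hu]; simp
  have h3 : v ⬝ᵥ (A *ᵥ u) = -(b ⬝ᵥ v) := by
    rw [hu]; simp [dotProduct_comm]
  have expand : (v - u) ⬝ᵥ (A *ᵥ (v - u)) =
      v ⬝ᵥ (A *ᵥ v) - v ⬝ᵥ (A *ᵥ u) - u ⬝ᵥ (A *ᵥ v) + u ⬝ᵥ (A *ᵥ u) := by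
    simp [mulVec_sub, dotProduct_sub, sub_dotProduct]; ring
  rw [expand, h1, h2, h3] at key
  linarith

/-- Monotonicity of the GTRS feasibility function: with `u(λ) = −(M + λH)⁻¹(m + λh)` and
`φ(λ) = u(λ)ᵀH u(λ) + 2hᵀu(λ)`, if `λ₁ ≤ λ₂` and `M + λ₁H`, `M + λ₂H` are both positive
definite, then `φ(λ₂) ≤ φ(λ₁)`; i.e., `φ` is nonincreasing on the positive-definite
interval of the pencil, justifying the bisection root search for `φ(λ) = 0`. -/
theorem stmt10 {n : ℕ} (M H : Matrix (Fin n) (Fin n) ℝ)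
    (hMsymm : M.IsSymm) (hHsymm : H.IsSymm) (m h : Fin n → ℝ)
    (u : ℝ → Fin n → ℝ) (hu : ∀ lam, u lam = -((M + lam • H)⁻¹ *ᵥ (m + lam • h)))
    (φ : ℝ → ℝ) (hφ : ∀ lam, φ lam = u lam ⬝ᵥ (H *ᵥ u lam) + 2 * (h ⬝ᵥ u lam))
    (lam1 lam2 : ℝ) (hle : lam1 ≤ lam2)
    (h1 : (M + lam1 • H).PosDef) (h2 : (M + lam2 • H).PosDef) :
    φ lam2 ≤ φ lam1 := by
  rcases eq_or_lt_of_le hle with heq | hlt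
  · simp [hφ, hu, heq]
  -- symmetry of pencil
  have hsymm : ∀ lam : ℝ, (M + lam • H).IsSymm := fun lam => by
    unfold Matrix.IsSymm
    rw [transpose_add, transpose_smul, hMsymm.eq, hHsymm.eq]
  -- A *ᵥ u = -b
  have hAu : ∀ lam : ℝ, (M + lam • H).PosDef →
      (M + lam • H) *ᵥ u lam = -(m + lam • h) := by
    intro lam hpd
    rw [hu lam, mulVec_neg, mulVec_mulVec,
      Matrix.mul_nonsing_inv _ (isUnit_iff_ne_zero.mpr (ne_of_gt hpd.det_pos))]
    simp
  -- quadratic pieces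
  set p : (Fin n → ℝ) → ℝ := fun v => v ⬝ᵥ (M *ᵥ v) + 2 * (m ⬝ᵥ v) with hp
  set q : (Fin n → ℝ) → ℝ := fun v => v ⬝ᵥ (H *ᵥ v) + 2 * (h ⬝ᵥ v) with hq
  have hL : ∀ (lam : ℝ) (v : Fin n → ℝ),
      v ⬝ᵥ ((M + lam • H) *ᵥ v) + 2 * ((m + lam • h) ⬝ᵥ v) = p v + lam * q v := by
    intro lam v
    simp [hp, hq, add_mulVec, smul_mulVec, dotProduct_add, add_dotProduct,
      dotProduct_smul, smul_dotProduct, smul_eq_mul]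
    ring
  have k1 := quad_min _ h1 (hsymm lam1) (m + lam1 • h) (u lam1) (u lam2) (hAu lam1 h1)
  have k2 := quad_min _ h2 (hsymm lam2) (m + lam2 • h) (u lam2) (u lam1) (hAu lam2 h2)
  rw [hL, hL] at k1 k2
  have hq12 : φ lam1 = q (u lam1) := by rw [hφ]
  have hq21 : φ lam2 = q (u lam2) := by rw [hφ]
  rw [hq12, hq21]
  nlinarith [k1, k2, hlt]
end

section
/- The semidefinite program is a valid relaxation of the fixed-height R-LS problem: for every X = (x, y) ∈ ℝ², setting t_k = ‖X − ã_k‖₂, v̄ = (x, y, t₁, …, t_K, 1) ∈ ℝ^{K+3}, and Z = v̄v̄ᵀ, the matrix Z satisfies all SDP constraints — Z ⪰ 0, Z_{K+3,K+3} = 1, Z_{k+2,K+3} ≥ 0 for all k, the coupling equalities Z_{k+2,k+2} = Z_{1,1} + Z_{2,2} − 2ã_kᵀ(Z_{1,K+3}, Z_{2,K+3}) + ‖ã_k‖₂², and for all k₁ ≠ k₂, with d = ‖ã_{k₁} − ã_{k₂}‖₂, the inequalities Z_{k₁+2,k₁+2} + Z_{k₂+2,k₂+2} − 2Z_{k₁+2,k₂+2}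 ≤ d² and Z_{k₁+2,K+3} + Z_{k₂+2,K+3} ≥ d — and the SDP objective evaluated at Z equals the R-LS cost: Σ_{k=1}^K w_k (r_k² − 2r_k Z_{k+2,K+3} + Z_{k+2,k+2}) = J_RLS(x, y; z₀). Consequently, the optimal value of the SDP is at most the infimum of J_RLS(·; z₀) over ℝ². -/
open Matrix


lemma psd_vecMulVec {n : Type*} [Fintype n] (v : n → ℝ) :
    (vecMulVec v v).PosSemidef := by
  refine posSemidef_iff_dotProduct_mulVec.mpr ⟨?_, ?_⟩
  · ext i j
    simp [conjTranspose_apply, vecMulVec_apply, mul_comm]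
  · intro x
    have h : vecMulVec v v *ᵥ x = fun i => v i * (v ⬝ᵥ x) := by
      ext i
      simp [mulVec, dotProduct, vecMulVec_apply, Finset.mul_sum, mul_assoc]
    rw [h, star_trivial]
    have : (x ⬝ᵥ fun i => v i * (v ⬝ᵥ x)) = (v ⬝ᵥ x) * (v ⬝ᵥ x) := by
      simp only [dotProduct]
      rw [Finset.sum_mul]
      congr 1; ext i; ring
    rw [this]
    exact mul_self_nonneg _

lemma psd_quad {n : Type*} [Fintype n] [DecidableEq n] {Z : Matrix n n ℝ}
    (hZ : Z.PosSemidef) (i j : n) (a b : ℝ) :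
    0 ≤ a * a * Z i i + a * b * Z i j + b * a * Z j i + b * b * Z j j := by
  have h := hZ.dotProduct_mulVec_nonneg (Pi.single i a + Pi.single j b)
  rw [star_trivial] at h
  simp only [mulVec_add, dotProduct_add, add_dotProduct, mulVec_single,
    single_dotProduct] at h
  simp only [Pi.smul_apply, op_smul_eq_mul, col_apply] at h
  linarith [h]

lemma norm_sub_sq_two (X a : EuclideanSpace ℝ (Fin 2)) :
    ‖X - a‖ ^ 2 = X 0 * X 0 + X 1 * X 1 - 2 * (a 0 * X 0 + a 1 * X 1) + ‖a‖ ^ 2 := by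
  have h := norm_sub_sq_real X a
  have hX : ‖X‖ ^ 2 = X 0 * X 0 + X 1 * X 1 := by
    rw [EuclideanSpace.norm_eq, Real.sq_sqrt (by positivity)]
    simp [Fin.sum_univ_two, sq]
  have hin : inner ℝ X a = a 0 * X 0 + a 1 * X 1 := by
    simp [PiLp.inner_apply, Fin.sum_univ_two, RCLike.inner_apply]
  rw [h, hX, hin]

/-- Index type for the lifted SDP variable `Z ∈ ℝ^{(K+3)×(K+3)}`: the first two indices
correspond to the target coordinates `(x, y)`, the middle `K` indices to the predicted
ranges `t₁, …, t_K`, and the final index to the homogenizing entry `1`. -/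
abbrev Idx (K : ℕ) := Fin 2 ⊕ Fin K ⊕ Fin 1

/-- The last (homogenizing) index, corresponding to index `K+3` in 1-based notation. -/
def lastIdx (K : ℕ) : Idx K := Sum.inr (Sum.inr 0)

/-- The index `k+2` (1-based) corresponding to the predicted range `t_k`. -/
def tIdx {K : ℕ} (k : Fin K) : Idx K := Sum.inr (Sum.inl k)

/-- The SDP is a valid relaxation of the fixed-height R-LS problem: for every target
position `X = (x, y) ∈ ℝ²`, the rank-one lift `Z = v̄v̄ᵀ` of the augmented vector
`v̄ = (x, y, t₁, …, t_K, 1)` with `t_k = ‖X − ã_k‖₂` satisfies all SDP constraints, and the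
SDP objective at `Z` equals the R-LS cost `J_RLS(x, y; z₀)`. Consequently, the optimal
value of the SDP is at most the infimum of `J_RLS(·; z₀)` over ℝ². -/
theorem stmt15 (K : ℕ) (atil : Fin K → EuclideanSpace ℝ (Fin 2))
    (r w : Fin K → ℝ) (hw : ∀ k, 0 < w k)
    (J : EuclideanSpace ℝ (Fin 2) → ℝ)
    (hJ : ∀ X, J X = ∑ k, w k * (‖X - atil k‖ - r k) ^ 2)
    (Obj : Matrix (Idx K) (Idx K) ℝ → ℝ)
    (hObj : ∀ Z, Obj Z = ∑ k, w k *
      ((r k) ^ 2 - 2 * r k * Z (tIdx k) (lastIdx K) + Z (tIdx k) (tIdx k)))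
    (Feas : Matrix (Idx K) (Idx K) ℝ → Prop)
    (hFeas : ∀ Z, Feas Z ↔
      Z.PosSemidef ∧
      Z (lastIdx K) (lastIdx K) = 1 ∧
      (∀ k, 0 ≤ Z (tIdx k) (lastIdx K)) ∧
      (∀ k, Z (tIdx k) (tIdx k) =
        Z (Sum.inl 0) (Sum.inl 0) + Z (Sum.inl 1) (Sum.inl 1) -
          2 * (atil k 0 * Z (Sum.inl 0) (lastIdx K) +
               atil k 1 * Z (Sum.inl 1) (lastIdx K)) + ‖atil k‖ ^ 2) ∧
      (∀ k1 k2, k1 ≠ k2 →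
        Z (tIdx k1) (tIdx k1) + Z (tIdx k2) (tIdx k2) - 2 * Z (tIdx k1) (tIdx k2) ≤
          ‖atil k1 - atil k2‖ ^ 2 ∧
        ‖atil k1 - atil k2‖ ≤ Z (tIdx k1) (lastIdx K) + Z (tIdx k2) (lastIdx K)))
    (vbar : EuclideanSpace ℝ (Fin 2) → Idx K → ℝ)
    (hvbar : ∀ X, vbar X =
      Sum.elim ![X 0, X 1] (Sum.elim (fun k => ‖X - atil k‖) fun _ => (1 : ℝ))) :
    (∀ X : EuclideanSpace ℝ (Fin 2),
      Feas (vecMulVec (vbar X) (vbar X)) ∧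
      Obj (vecMulVec (vbar X) (vbar X)) = J X) ∧
    sInf (Obj '' {Z | Feas Z}) ≤ ⨅ X : EuclideanSpace ℝ (Fin 2), J X := by
  have main : ∀ X : EuclideanSpace ℝ (Fin 2),
      Feas (vecMulVec (vbar X) (vbar X)) ∧ Obj (vecMulVec (vbar X) (vbar X)) = J X := by
    intro X
    have hv0 : vbar X (Sum.inl 0) = X 0 := by simp [hvbar]
    have hv1 : vbar X (Sum.inl 1) = X 1 := by simp [hvbar]
    have hvt : ∀ k, vbar X (tIdx k) = ‖X - atil k‖ := by
      intro k; simp [hvbar, tIdx]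
    have hvl : vbar X (lastIdx K) = 1 := by simp [hvbar, lastIdx]
    constructor
    · rw [hFeas]
      refine ⟨psd_vecMulVec _, ?_, ?_, ?_, ?_⟩
      · simp [vecMulVec_apply, hvl]
      · intro k
        simp only [vecMulVec_apply, hvt, hvl, mul_one]
        exact norm_nonneg _
      · intro k
        simp only [vecMulVec_apply, hvt, hvl, hv0, hv1, mul_one]
        rw [← sq, norm_sub_sq_two X (atil k)]
      · intro k1 k2 _
        constructor
        · have h := abs_norm_sub_norm_le (X - atil k1) (X - atil k2)
          have h2 : (X - atil k1) - (X - atil k2) = atil k2 - atil k1 := by abel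
          rw [h2, norm_sub_rev (atil k2) (atil k1)] at h
          have hsq : (‖X - atil k1‖ - ‖X - atil k2‖) ^ 2 ≤ ‖atil k1 - atil k2‖ ^ 2 := by
            have := pow_le_pow_left₀ (abs_nonneg _) h 2
            rwa [sq_abs] at this
          simp only [vecMulVec_apply, hvt]
          nlinarith [hsq]
        · simp only [vecMulVec_apply, hvt, hvl, mul_one]
          have h2 : (X - atil k2) - (X - atil k1) = atil k1 - atil k2 := by abel
          have := norm_sub_le (X - atil k2) (X - atil k1)
          rw [h2] at this
          linarith
    · rw [hObj, hJ]
      refine Finset.sum_congr rfl fun k _ => ?_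
      simp only [vecMulVec_apply, hvt, hvl, mul_one]
      ring
  refine ⟨main, ?_⟩
  have hbdd : BddBelow (Obj '' {Z | Feas Z}) := by
    refine ⟨0, ?_⟩
    rintro y ⟨Z, hZ, rfl⟩
    rw [hObj]
    refine Finset.sum_nonneg fun k _ => ?_
    obtain ⟨hpsd, hlast, -, -, -⟩ := (hFeas Z).mp hZ
    have h := psd_quad hpsd (tIdx k) (lastIdx K) 1 (-(r k))
    have hsym : Z (tIdx k) (lastIdx K) = Z (lastIdx K) (tIdx k) := by
      have h2 := congrFun (congrFun hpsd.1 (lastIdx K)) (tIdx k)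
      simpa [conjTranspose_apply] using h2
    rw [← hsym, hlast] at h
    have : 0 ≤ (r k) ^ 2 - 2 * r k * Z (tIdx k) (lastIdx K) + Z (tIdx k) (tIdx k) := by
      nlinarith [h]
    exact mul_nonneg (hw k).le this
  exact le_ciInf fun X => csInf_le hbdd ⟨_, (main X).1, (main X).2⟩
end

section
/- Exactness of the semidefinite relaxation under the rank-one condition: suppose Z* ∈ ℝ^{(K+3)×(K+3)} is feasible for the SDP (i.e., Z* ⪰ 0, Z*_{K+3,K+3} = 1, Z*_{k+2,K+3} ≥ 0 for all k, the coupling equalities Z*_{k+2,k+2} = Z*_{1,1} + Z*_{2,2} − 2ã_kᵀ(Z*_{1,K+3}, Z*_{2,K+3}) + ‖ã_k‖₂² hold), Z* minimizes the SDP objective Σ_{k=1}^K w_k (r_k² − 2r_k Z_{k+2,K+3} + Z_{k+2,k+2}) over all feasible Z, and Z* = v̄v̄ᵀ for some v̄ ∈ ℝ^{K+3} with v̄_{K+3} = 1. Then X* = (Z*_{1,K+3}, Z*_{2,K+3}) is a global minimizer of the fixed-height R-LS cost: J_RLS(X*; z₀) ≤ J_RLS(x, y; z₀) for all (x, y) ∈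 ℝ². -/
open Matrix

lemma psd_vmv {n : Type*} [Fintype n] (u : n → ℝ) : (vecMulVec u u).PosSemidef := by
  have h : vecMulVec u u = (replicateRow Unit u)ᴴ * (replicateRow Unit u) := by
    rw [conjTranspose_replicateRow]
    simp [vecMulVec_eq (ι := Unit)]
  rw [h]; exact posSemidef_conjTranspose_mul_self _

lemma normsq2 (v : EuclideanSpace ℝ (Fin 2)) : ‖v‖ ^ 2 = v 0 ^ 2 + v 1 ^ 2 := by
  rw [EuclideanSpace.norm_eq, Real.sq_sqrt (by positivity)]
  simp [Fin.sum_univ_two, sq_abs]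

/-- Exactness of the semidefinite relaxation under the rank-one condition: if `Z*` is
feasible for the SDP, minimizes the SDP objective over all feasible `Z`, and is rank one,
`Z* = v̄v̄ᵀ` with the last entry of `v̄` equal to `1`, then `X* = (Z*_{1,K+3}, Z*_{2,K+3})`
globally minimizes the fixed-height R-LS cost `J_RLS(·; z₀)`. -/
theorem stmt16 (K : ℕ) (atil : Fin K → EuclideanSpace ℝ (Fin 2))
    (r w : Fin K → ℝ) (hw : ∀ k, 0 < w k)
    (J : EuclideanSpace ℝ (Fin 2) → ℝ)
    (hJ : ∀ X, J X = ∑ k, w k * (‖X - atil k‖ - r k) ^ 2)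
    (Obj : Matrix (Idx K) (Idx K) ℝ → ℝ)
    (hObj : ∀ Z, Obj Z = ∑ k, w k *
      ((r k) ^ 2 - 2 * r k * Z (tIdx k) (lastIdx K) + Z (tIdx k) (tIdx k)))
    (Feas : Matrix (Idx K) (Idx K) ℝ → Prop)
    (hFeas : ∀ Z, Feas Z ↔
      Z.PosSemidef ∧
      Z (lastIdx K) (lastIdx K) = 1 ∧
      (∀ k, 0 ≤ Z (tIdx k) (lastIdx K)) ∧
      (∀ k, Z (tIdx k) (tIdx k) =
        Z (Sum.inl 0) (Sum.inl 0) + Z (Sum.inl 1) (Sum.inl 1) -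
          2 * (atil k 0 * Z (Sum.inl 0) (lastIdx K) +
               atil k 1 * Z (Sum.inl 1) (lastIdx K)) + ‖atil k‖ ^ 2) ∧
      (∀ k1 k2, k1 ≠ k2 →
        Z (tIdx k1) (tIdx k1) + Z (tIdx k2) (tIdx k2) - 2 * Z (tIdx k1) (tIdx k2) ≤
          ‖atil k1 - atil k2‖ ^ 2 ∧
        ‖atil k1 - atil k2‖ ≤ Z (tIdx k1) (lastIdx K) + Z (tIdx k2) (lastIdx K)))
    (Zstar : Matrix (Idx K) (Idx K) ℝ)
    (hZfeas : Feas Zstar)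
    (hZopt : ∀ Z, Feas Z → Obj Zstar ≤ Obj Z)
    (vbar : Idx K → ℝ)
    (hrank1 : Zstar = vecMulVec vbar vbar)
    (hvlast : vbar (lastIdx K) = 1) :
    ∀ X : EuclideanSpace ℝ (Fin 2),
      J ((EuclideanSpace.equiv (Fin 2) ℝ).symm
          ![Zstar (Sum.inl 0) (lastIdx K), Zstar (Sum.inl 1) (lastIdx K)]) ≤ J X := by
  intro X
  obtain ⟨-, -, hpos, hcoup, -⟩ := (hFeas Zstar).mp hZfeas
  set Xs : EuclideanSpace ℝ (Fin 2) := (EuclideanSpace.equiv (Fin 2) ℝ).symm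
      ![Zstar (Sum.inl 0) (lastIdx K), Zstar (Sum.inl 1) (lastIdx K)] with hXs
  have hXs0 : Xs 0 = Zstar (Sum.inl 0) (lastIdx K) := rfl
  have hXs1 : Xs 1 = Zstar (Sum.inl 1) (lastIdx K) := rfl
  have hZe : ∀ i j, Zstar i j = vbar i * vbar j := by
    intro i j; rw [hrank1, vecMulVec_apply]
  -- t_k = ‖Xs - atil k‖
  have ht : ∀ k, Zstar (tIdx k) (lastIdx K) = ‖Xs - atil k‖ := by
    intro k
    have hsq : Zstar (tIdx k) (lastIdx K) ^ 2 = ‖Xs - atil k‖ ^ 2 := by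
      have h1 : Zstar (tIdx k) (lastIdx K) ^ 2 = Zstar (tIdx k) (tIdx k) := by
        simp [hZe, hvlast]; ring
      rw [h1, hcoup k, normsq2 (Xs - atil k), normsq2 (atil k)]
      have e0 : (Xs - atil k) 0 = Xs 0 - atil k 0 := rfl
      have e1 : (Xs - atil k) 1 = Xs 1 - atil k 1 := rfl
      rw [e0, e1, hXs0, hXs1]
      have hz00 : Zstar (Sum.inl 0) (Sum.inl 0) = Zstar (Sum.inl 0) (lastIdx K) ^ 2 := by
        simp [hZe, hvlast]; ring
      have hz11 : Zstar (Sum.inl 1) (Sum.inl 1) = Zstar (Sum.inl 1) (lastIdx K) ^ 2 := by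
        simp [hZe, hvlast]; ring
      rw [hz00, hz11]; ring
    have := hpos k
    calc Zstar (tIdx k) (lastIdx K) = Real.sqrt (Zstar (tIdx k) (lastIdx K) ^ 2) :=
          (Real.sqrt_sq this).symm
      _ = Real.sqrt (‖Xs - atil k‖ ^ 2) := by rw [hsq]
      _ = ‖Xs - atil k‖ := Real.sqrt_sq (norm_nonneg _)
  -- J Xs = Obj Zstar
  have hJXs : J Xs = Obj Zstar := by
    rw [hJ, hObj]
    refine Finset.sum_congr rfl fun k _ => ?_
    have h1 : Zstar (tIdx k) (tIdx k) = Zstar (tIdx k) (lastIdx K) ^ 2 := by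
      simp [hZe, hvlast]; ring
    rw [h1, ht k]; ring
  -- build feasible Z from X
  set u : Idx K → ℝ :=
    Sum.elim (fun i => X i) (Sum.elim (fun k => ‖X - atil k‖) (fun _ => 1)) with hu
  set Z : Matrix (Idx K) (Idx K) ℝ := vecMulVec u u with hZ
  have hZij : ∀ i j, Z i j = u i * u j := fun i j => vecMulVec_apply u u i j
  have hul : u (lastIdx K) = 1 := rfl
  have hut : ∀ k, u (tIdx k) = ‖X - atil k‖ := fun k => rfl
  have hu0 : u (Sum.inl 0) = X 0 := rfl
  have hu1 : u (Sum.inl 1) = X 1 := rfl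
  have hZfeas' : Feas Z := by
    rw [hFeas]
    refine ⟨psd_vmv u, by rw [hZij, hul]; ring, fun k => ?_, fun k => ?_, fun k1 k2 _ => ?_⟩
    · rw [hZij, hul, hut]; positivity
    · rw [hZij, hZij, hZij, hZij, hZij, hut, hul, hu0, hu1]
      have := normsq2 (X - atil k)
      have e0 : (X - atil k) 0 = X 0 - atil k 0 := rfl
      have e1 : (X - atil k) 1 = X 1 - atil k 1 := rfl
      rw [e0, e1] at this
      rw [normsq2 (atil k)]
      nlinarith [this]
    · constructor
      · rw [hZij, hZij, hZij, hut, hut]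
        have htri : |‖X - atil k1‖ - ‖X - atil k2‖| ≤ ‖atil k1 - atil k2‖ := by
          have := abs_norm_sub_norm_le (X - atil k1) (X - atil k2)
          have e : (X - atil k1) - (X - atil k2) = atil k2 - atil k1 := by abel
          rw [e, norm_sub_rev (atil k2) (atil k1)] at this
          exact this
        nlinarith [htri, abs_nonneg (‖X - atil k1‖ - ‖X - atil k2‖), sq_abs (‖X - atil k1‖ - ‖X - atil k2‖), norm_nonneg (atil k1 - atil k2)]
      · rw [hZij, hZij, hut, hut, hul]
        have := norm_sub_le (X - atil k2) (X - atil k1)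
        have e : (X - atil k2) - (X - atil k1) = atil k1 - atil k2 := by abel
        rw [e] at this
        linarith
  have hObjZ : Obj Z = J X := by
    rw [hJ, hObj]
    refine Finset.sum_congr rfl fun k _ => ?_
    rw [hZij, hZij, hut, hul]
    have := normsq2 (X - atil k)
    ring
  calc J Xs = Obj Zstar := hJXs
    _ ≤ Obj Z := hZopt Z hZfeas'
    _ = J X := hObjZ
end
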